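/- Let F(t) = exp(t)/(1+exp(t)) and K₂ > 0. Let Z₁, Z₂ be real random variables with E[(F(Z₁) - F(Z₂))²] < (F(4K₂) - F(2K₂))²/4 and P(|Z₂| ≤ 2K₂) ≥ 3/4. Then P(|Z₁| ≤ 4K₂) ≥ 1/2. -/

import Mathlib

open MeasureTheory

private lemma F_lt_F (a b : ℝ) (h : a < b) :
    Real.exp a / (1 + Real.exp a) < Real.exp b / (1 + Real.exp b) := by
  have ha : (0:ℝ) < 1 + Real.exp a := by positivity
  have hb : (0:ℝ) < 1 + Real.exp b := by positivity
  rw [div_lt_div_iff₀ ha hb]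
  have := Real.exp_lt_exp.2 h
  nlinarith

private lemma F_neg (x : ℝ) :
    Real.exp (-x) / (1 + Real.exp (-x)) = 1 - Real.exp x / (1 + Real.exp x) := by
  have hx : (0:ℝ) < Real.exp x := Real.exp_pos x
  rw [Real.exp_neg]
  field_simp
  ring

/-- If the expected squared logistic discrepancy is small and Z₂ is concentrated,
then Z₁ is concentrated too. -/
theorem Z1_concentration
    {Ω : Type*} [MeasurableSpace Ω] (μ : Measure Ω) [IsProbabilityMeasure μ]
    (F : ℝ → ℝ) (hF : ∀ t, F t = Real.exp t / (1 + Real.exp t))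
    (K₂ : ℝ) (hK₂ : 0 < K₂)
    (Z₁ Z₂ : Ω → ℝ) (hZ₁ : Measurable Z₁) (hZ₂ : Measurable Z₂)
    (hexp : ∫ ω, (F (Z₁ ω) - F (Z₂ ω)) ^ 2 ∂μ < (F (4 * K₂) - F (2 * K₂)) ^ 2 / 4)
    (hZ₂conc : ENNReal.ofReal (3/4) ≤ μ {ω | |Z₂ ω| ≤ 2 * K₂}) :
    ENNReal.ofReal (1/2) ≤ μ {ω | |Z₁ ω| ≤ 4 * K₂} := by
  have hFdef : F = fun t => Real.exp t / (1 + Real.exp t) := funext hF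
  have hFmono : ∀ a b : ℝ, a < b → F a < F b := by
    intro a b h; rw [hF, hF]; exact F_lt_F a b h
  have hFmono' : ∀ a b : ℝ, a ≤ b → F a ≤ F b := by
    intro a b h
    rcases eq_or_lt_of_le h with rfl | h
    · exact le_rfl
    · exact (hFmono a b h).le
  have hFneg : ∀ x : ℝ, F (-x) = 1 - F x := by
    intro x; rw [hF, hF]; exact F_neg x
  have hFcont : Continuous F := by
    rw [hFdef]
    exact Real.continuous_exp.div (continuous_const.add Real.continuous_exp)
      (fun x => by positivity)
  have hFbd : ∀ t : ℝ, 0 ≤ F t ∧ F t ≤ 1 := by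
    intro t; rw [hF]
    constructor
    · positivity
    · rw [div_le_one (by positivity)]; linarith [Real.exp_pos t]
  set c : ℝ := F (4 * K₂) - F (2 * K₂) with hc
  have hcpos : 0 < c := sub_pos.2 (hFmono _ _ (by linarith))
  set f : Ω → ℝ := fun ω => (F (Z₁ ω) - F (Z₂ ω)) ^ 2 with hf
  have hfmeas : Measurable f := by
    apply Measurable.pow_const
    exact ((hFcont.measurable.comp hZ₁).sub (hFcont.measurable.comp hZ₂))
  have hfnonneg : ∀ ω, 0 ≤ f ω := fun ω => sq_nonneg _
  have hfbd : ∀ ω, ‖f ω‖ ≤ 1 := by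
    intro ω
    rw [Real.norm_eq_abs, abs_of_nonneg (hfnonneg ω)]
    have h1 := hFbd (Z₁ ω); have h2 := hFbd (Z₂ ω)
    simp only [hf]
    nlinarith [h1.1, h1.2, h2.1, h2.2]
  have hfint : Integrable f μ :=
    (integrable_const (1:ℝ)).mono' hfmeas.aestronglyMeasurable
      (Filter.Eventually.of_forall hfbd)
  set A : Set Ω := {ω | 4 * K₂ < |Z₁ ω|} ∩ {ω | |Z₂ ω| ≤ 2 * K₂} with hA
  have hAmeas : MeasurableSet A := by
    apply MeasurableSet.inter
    · exact measurableSet_lt measurable_const hZ₁.abs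
    · exact measurableSet_le hZ₂.abs measurable_const
  -- pointwise lower bound on A
  have hptwise : ∀ ω ∈ A, c ^ 2 ≤ f ω := by
    rintro ω ⟨h1, h2⟩
    simp only [Set.mem_setOf_eq] at h1 h2
    rw [abs_le] at h2
    rw [lt_abs] at h1
    have hF2 : F (Z₂ ω) ≤ F (2 * K₂) := hFmono' _ _ h2.2
    have hF2' : F (-(2 * K₂)) ≤ F (Z₂ ω) := hFmono' _ _ h2.1
    rcases h1 with h1 | h1
    · -- Z₁ ω > 4K₂
      have : F (4 * K₂) ≤ F (Z₁ ω) := hFmono' _ _ h1.le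
      have hcle : c ≤ F (Z₁ ω) - F (Z₂ ω) := by rw [hc]; linarith
      have : c ^ 2 ≤ (F (Z₁ ω) - F (Z₂ ω)) ^ 2 := by nlinarith
      exact this
    · -- Z₁ ω < -4K₂
      have h1' : Z₁ ω < -(4 * K₂) := by linarith
      have : F (Z₁ ω) ≤ F (-(4 * K₂)) := hFmono' _ _ h1'.le
      rw [hFneg] at this
      rw [hFneg] at hF2'
      have hcle : c ≤ F (Z₂ ω) - F (Z₁ ω) := by rw [hc]; linarith
      have : c ^ 2 ≤ (F (Z₁ ω) - F (Z₂ ω)) ^ 2 := by nlinarith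
      exact this
  have hμA_ne_top : μ A ≠ ⊤ := measure_ne_top μ A
  have hlow : c ^ 2 * (μ A).toReal ≤ ∫ ω in A, f ω ∂μ := by
    have := setIntegral_ge_of_const_le_real hAmeas hμA_ne_top hptwise hfint.integrableOn
    exact this
  have hAint_le : ∫ ω in A, f ω ∂μ ≤ ∫ ω, f ω ∂μ :=
    setIntegral_le_integral hfint (Filter.Eventually.of_forall hfnonneg)
  have htotal : ∫ ω, f ω ∂μ < c ^ 2 / 4 := hexp
  have hμAreal : (μ A).toReal < 1 / 4 := by
    by_contra hcon
    push_neg at hcon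
    have : c ^ 2 * (1/4) ≤ c ^ 2 * (μ A).toReal :=
      mul_le_mul_of_nonneg_left hcon (sq_nonneg c)
    nlinarith
  have hμA : μ A ≤ ENNReal.ofReal (1/4) := by
    rw [← ENNReal.ofReal_toReal hμA_ne_top]
    exact ENNReal.ofReal_le_ofReal hμAreal.le
  -- bound on μ Bᶜ
  set B : Set Ω := {ω | |Z₂ ω| ≤ 2 * K₂} with hB
  have hBmeas : MeasurableSet B := measurableSet_le hZ₂.abs measurable_const
  have hμBc : μ Bᶜ ≤ ENNReal.ofReal (1/4) := by
    have hcompl : μ Bᶜ = 1 - μ B := by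
      rw [measure_compl hBmeas (measure_ne_top μ B), measure_univ]
    rw [hcompl]
    calc 1 - μ B ≤ 1 - ENNReal.ofReal (3/4) := tsub_le_tsub_left hZ₂conc 1
      _ = ENNReal.ofReal (1/4) := by
          rw [← ENNReal.ofReal_one, ← ENNReal.ofReal_sub _ (by norm_num)]
          norm_num
  -- complement of goal set
  set S : Set Ω := {ω | |Z₁ ω| ≤ 4 * K₂} with hS
  have hSmeas : MeasurableSet S := measurableSet_le hZ₁.abs measurable_const
  have hsub : Sᶜ ⊆ A ∪ Bᶜ := by
    intro ω hω
    simp only [hS, Set.mem_compl_iff, Set.mem_setOf_eq, not_le] at hω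
    by_cases hb : ω ∈ B
    · exact Or.inl ⟨hω, hb⟩
    · exact Or.inr hb
  have hμSc : μ Sᶜ ≤ ENNReal.ofReal (1/2) := by
    calc μ Sᶜ ≤ μ (A ∪ Bᶜ) := measure_mono hsub
      _ ≤ μ A + μ Bᶜ := measure_union_le _ _
      _ ≤ ENNReal.ofReal (1/4) + ENNReal.ofReal (1/4) := add_le_add hμA hμBc
      _ = ENNReal.ofReal (1/2) := by
          rw [← ENNReal.ofReal_add (by norm_num) (by norm_num)]; norm_num
  have hSc : μ S = 1 - μ Sᶜ := by
    have h := measure_compl hSmeas.compl (measure_ne_top μ Sᶜ)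
    rwa [compl_compl, measure_univ] at h
  rw [hSc]
  calc ENNReal.ofReal (1/2) = 1 - ENNReal.ofReal (1/2) := by
        rw [← ENNReal.ofReal_one, ← ENNReal.ofReal_sub _ (by norm_num)]
        norm_num
    _ ≤ 1 - μ Sᶜ := tsub_le_tsub_left hμSc 1
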